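/- Fix θ₀ ∈ (0, π]. A mixed graph G is bipartite if and only if there exists ε > 0 such that G has the θ-symmetric spectrum for every θ ∈ (θ₀ − ε, θ₀ + ε). -/

import Mathlib

open Polynomial Matrix Real

/-- The θ-Hermitian adjacency matrix of a mixed graph on `Fin n` with arc
relation `A` (no loops). -/
noncomputable def MGHerm {n : ℕ} (A : Fin n → Fin n → Bool) (θ : ℝ) : Matrix (Fin n) (Fin n) ℂ :=
  fun x y =>
    if A x y ∧ A y x then 1
    else if A x y then Complex.exp (θ * Complex.I)
    else if A y x then Complex.exp (-θ * Complex.I)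
    else 0

/-- A mixed graph is bipartite if its underlying graph is bipartite. -/
def MGBipartite {n : ℕ} (A : Fin n → Fin n → Bool) : Prop :=
  ∃ S : Set (Fin n), ∀ x y : Fin n, (A x y ∨ A y x) → (x ∈ S ↔ y ∉ S)

/-- The spectrum of `M` (as a root multiset of its characteristic polynomial)
is symmetric with respect to the origin, with multiplicities. -/
def SymSpec {n : ℕ} (M : Matrix (Fin n) (Fin n) ℂ) : Prop :=
  ∀ μ : ℂ, M.charpoly.rootMultiplicity μ = M.charpoly.rootMultiplicity (-μ)

section Walks

variable {n : ℕ}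

def IsWalk (R : Fin n → Fin n → Prop) (m : ℕ) (x y : Fin n) : Prop :=
  ∃ w : ℕ → Fin n, w 0 = x ∧ w m = y ∧ ∀ i < m, R (w i) (w (i + 1))

lemma isWalk_refl (R : Fin n → Fin n → Prop) (x : Fin n) : IsWalk R 0 x x :=
  ⟨fun _ => x, rfl, rfl, fun i hi => absurd hi (Nat.not_lt_zero i)⟩

lemma isWalk_single {R : Fin n → Fin n → Prop} {x y : Fin n} (h : R x y) : IsWalk R 1 x y := by
  refine ⟨fun i => if i = 0 then x else y, by simp, by simp, ?_⟩
  intro i hi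
  interval_cases i
  simpa using h

lemma isWalk_append {R : Fin n → Fin n → Prop} {m l : ℕ} {x y z : Fin n}
    (h1 : IsWalk R m x y) (h2 : IsWalk R l y z) : IsWalk R (m + l) x z := by
  obtain ⟨w1, hw10, hw1m, hw1⟩ := h1
  obtain ⟨w2, hw20, hw2l, hw2⟩ := h2
  refine ⟨fun i => if i ≤ m then w1 i else w2 (i - m), by simp [hw10], ?_, ?_⟩
  · by_cases hml : m + l ≤ m
    · have hl0 : l = 0 := by omega
      subst hl0
      simp only [Nat.add_zero, le_refl, if_pos]
      rw [hw1m, ← hw20, hw2l]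
    · simp only [if_neg hml]
      rw [show m + l - m = l by omega, hw2l]
  · intro i hi
    by_cases h1' : i + 1 ≤ m
    · have hi' : i ≤ m := by omega
      simp only [if_pos hi', if_pos h1']
      exact hw1 i (by omega)
    · by_cases h2' : i ≤ m
      · have him : i = m := by omega
        simp only [if_pos h2', if_neg h1']
        subst him
        rw [hw1m, show i + 1 - i = 1 by omega, ← hw20]
        have := hw2 0 (by omega)
        rwa [hw20, ← hw20] at this
      · simp only [if_neg h2', if_neg h1']
        rw [show i + 1 - m = (i - m) + 1 by omega]
        exact hw2 (i - m) (by omega)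

lemma isWalk_reverse {R : Fin n → Fin n → Prop} (hR : ∀ a b, R a b → R b a) {m : ℕ}
    {x y : Fin n} (h : IsWalk R m x y) : IsWalk R m y x := by
  obtain ⟨w, hw0, hwm, hw⟩ := h
  refine ⟨fun i => w (m - i), by simpa using hwm, by simpa using hw0, ?_⟩
  intro i hi
  have h1 : m - i = (m - (i + 1)) + 1 := by omega
  show R (w (m - i)) (w (m - (i + 1)))
  rw [h1]
  exact hR _ _ (hw (m - (i + 1)) (by omega))

lemma exists_odd_closed_walk {R : Fin n → Fin n → Prop} (hR : ∀ a b, R a b → R b a)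
    (hnb : ¬ ∃ S : Set (Fin n), ∀ x y, R x y → (x ∈ S ↔ y ∉ S)) :
    ∃ (v : Fin n) (k : ℕ), Odd k ∧ IsWalk R k v v := by
  by_contra hcon
  push_neg at hcon
  apply hnb
  classical
  let Reach : Fin n → Fin n → Prop := fun u v => ∃ m, IsWalk R m u v
  let F : Fin n → Finset (Fin n) := fun v => Finset.univ.filter (fun u => Reach u v)
  have hmem : ∀ v, v ∈ F v := fun v =>
    Finset.mem_filter.mpr ⟨Finset.mem_univ v, 0, isWalk_refl R v⟩
  let rep : Fin n → Fin n := fun v => (F v).min' ⟨v, hmem v⟩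
  have hrep_reach : ∀ v, Reach (rep v) v := fun v =>
    (Finset.mem_filter.mp ((F v).min'_mem ⟨v, hmem v⟩)).2
  have hrep_edge : ∀ x y, R x y → rep x = rep y := by
    intro x y hxy
    have hF : F x = F y := by
      ext u
      simp only [F, Finset.mem_filter, Finset.mem_univ, true_and]
      constructor
      · rintro ⟨m, hm⟩; exact ⟨m + 1, isWalk_append hm (isWalk_single hxy)⟩
      · rintro ⟨m, hm⟩; exact ⟨m + 1, isWalk_append hm (isWalk_single (hR _ _ hxy))⟩
    simp only [rep, hF]
  refine ⟨{v | ∃ m, Odd m ∧ IsWalk R m (rep v) v}, ?_⟩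
  intro x y hxy
  have hrxy := hrep_edge x y hxy
  constructor
  · rintro ⟨m1, hm1odd, hm1⟩ ⟨m2, hm2odd, hm2⟩
    have w1 : IsWalk R (m1 + 1) (rep x) y := isWalk_append hm1 (isWalk_single hxy)
    have w2 : IsWalk R m2 y (rep x) := by
      rw [hrxy]; exact isWalk_reverse hR hm2
    obtain ⟨a, ha⟩ := hm1odd
    obtain ⟨b, hb⟩ := hm2odd
    exact hcon (rep x) (m1 + 1 + m2) ⟨a + b + 1, by omega⟩ (isWalk_append w1 w2)
  · intro hy
    obtain ⟨m, hm⟩ := hrep_reach y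
    have hmodd : ¬ Odd m := fun ho => hy ⟨m, ho, hm⟩
    refine ⟨m + 1, ?_, ?_⟩
    · rcases Nat.even_or_odd m with he | ho
      · obtain ⟨a, ha⟩ := he; exact ⟨a, by omega⟩
      · exact absurd ho hmodd
    · rw [hrxy]
      exact isWalk_append hm (isWalk_single (hR _ _ hxy))

lemma pow_entry_nonneg {B : Matrix (Fin n) (Fin n) ℝ} (hB : ∀ x y, 0 ≤ B x y) (k : ℕ) :
    ∀ x y, 0 ≤ (B ^ k) x y := by
  induction k with
  | zero =>
    intro x y
    by_cases h : x = y <;> simp [pow_zero, Matrix.one_apply, h]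
  | succ k ih =>
    intro x y
    rw [pow_succ, Matrix.mul_apply]
    exact Finset.sum_nonneg fun z _ => mul_nonneg (ih x z) (hB z y)

lemma one_le_pow_entry {B : Matrix (Fin n) (Fin n) ℝ} (hB : ∀ x y, 0 ≤ B x y)
    {R : Fin n → Fin n → Prop} (hBR : ∀ x y, R x y → 1 ≤ B x y) :
    ∀ (m : ℕ) (x y : Fin n), IsWalk R m x y → 1 ≤ (B ^ m) x y := by
  intro m
  induction m with
  | zero =>
    rintro x y ⟨w, h0, hm, -⟩
    have hxy : x = y := by rw [← h0, hm]
    subst hxy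
    simp [pow_zero, Matrix.one_apply_eq]
  | succ m ih =>
    rintro x y ⟨w, h0, hm, hw⟩
    rw [pow_succ', Matrix.mul_apply]
    have hw1 : IsWalk R m (w 1) y := ⟨fun i => w (i + 1), rfl, hm, fun i hi => hw (i + 1) (by omega)⟩
    have hb1 : 1 ≤ B x (w 1) := hBR x (w 1) (h0 ▸ hw 0 (by omega))
    have hb2 : 1 ≤ (B ^ m) (w 1) y := ih (w 1) y hw1
    calc (1 : ℝ) ≤ B x (w 1) * (B ^ m) (w 1) y := by nlinarith
      _ ≤ ∑ z, B x z * (B ^ m) z y :=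
        Finset.single_le_sum (fun z _ => mul_nonneg (hB x z) (pow_entry_nonneg hB m z y))
          (Finset.mem_univ (w 1))

end Walks


section Spec

variable {n : ℕ}

lemma charpoly_conj_of_inv (P M Q : Matrix (Fin n) (Fin n) ℂ) (hPQ : P * Q = 1) :
    (P * M * Q).charpoly = M.charpoly := by
  have hPQ' : P.map C * Q.map C = 1 := by
    rw [← Matrix.map_mul, hPQ]
    ext i j
    by_cases h : i = j <;> simp [Matrix.one_apply, h]
  have hdet : (P.map C).det * (Q.map C).det = 1 := by
    rw [← Matrix.det_mul, hPQ', Matrix.det_one]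
  have hcomm : ∀ N : Matrix (Fin n) (Fin n) ℂ[X], Matrix.scalar (Fin n) (X : ℂ[X]) * N
      = N * Matrix.scalar (Fin n) (X : ℂ[X]) := by
    intro N
    exact (Matrix.scalar_commute (X : ℂ[X]) (fun r => Commute.all X r) N)
  have hcm : charmatrix (P * M * Q) = P.map C * charmatrix M * Q.map C := by
    show Matrix.scalar (Fin n) (X : ℂ[X]) - (C : ℂ →+* ℂ[X]).mapMatrix (P * M * Q)
      = P.map C * (Matrix.scalar (Fin n) (X : ℂ[X]) - (C : ℂ →+* ℂ[X]).mapMatrix M) * Q.map C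
    simp only [RingHom.mapMatrix_apply, Matrix.map_mul, mul_sub, sub_mul]
    congr 1
    rw [← hcomm (P.map C), mul_assoc, hPQ', mul_one]
  rw [Matrix.charpoly, hcm, Matrix.det_mul, Matrix.det_mul, Matrix.charpoly]
  linear_combination (charmatrix M).det * hdet

end Spec

section Spec2

variable {n : ℕ}

lemma charpoly_diagonal' (d : Fin n → ℂ) :
    (diagonal d).charpoly = ∏ i, (X - C (d i)) := by
  have h : charmatrix (diagonal d) = diagonal fun i => X - C (d i) := by
    ext i j
    by_cases h : i = j
    · subst h; simp
    · rw [charmatrix_apply_ne _ _ _ h, Matrix.diagonal_apply_ne _ h,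
        Matrix.diagonal_apply_ne _ h, map_zero, neg_zero]
  rw [Matrix.charpoly, h, Matrix.det_diagonal]

lemma conj_unit_pow (U D : Matrix (Fin n) (Fin n) ℂ) (hU : U * star U = 1)
    (hU' : star U * U = 1) (k : ℕ) : (U * D * star U) ^ k = U * D ^ k * star U := by
  induction k with
  | zero => simp only [pow_zero, mul_one, hU]
  | succ k ih =>
    calc (U * D * star U) ^ (k + 1) = (U * D ^ k * star U) * (U * D * star U) := by
          rw [pow_succ, ih]
      _ = U * (D ^ k * ((star U * U) * (D * star U))) := by simp only [mul_assoc]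
      _ = U * D ^ (k + 1) * star U := by rw [hU', one_mul, pow_succ]; simp only [mul_assoc]

lemma herm_trace_pow {M : Matrix (Fin n) (Fin n) ℂ} (hM : M.IsHermitian) (k : ℕ) :
    (M ^ k).trace = ∑ i, ((hM.eigenvalues i : ℝ) : ℂ) ^ k := by
  have hU := Matrix.mem_unitaryGroup_iff.mp (Matrix.IsHermitian.eigenvectorUnitary hM).2
  have hU' := Matrix.mem_unitaryGroup_iff'.mp (Matrix.IsHermitian.eigenvectorUnitary hM).2
  conv_lhs => rw [hM.spectral_theorem, Unitary.conjStarAlgAut_apply]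
  rw [conj_unit_pow _ _ hU hU' k, Matrix.trace_mul_comm, ← mul_assoc, hU', one_mul,
    Matrix.diagonal_pow, Matrix.trace_diagonal]
  simp [Function.comp]

lemma herm_charpoly {M : Matrix (Fin n) (Fin n) ℂ} (hM : M.IsHermitian) :
    M.charpoly = ∏ i, (X - C ((hM.eigenvalues i : ℝ) : ℂ)) := by
  have hU := Matrix.mem_unitaryGroup_iff.mp (Matrix.IsHermitian.eigenvectorUnitary hM).2
  conv_lhs => rw [hM.spectral_theorem, Unitary.conjStarAlgAut_apply]
  rw [charpoly_conj_of_inv _ _ _ hU, charpoly_diagonal']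
  simp [Function.comp]

end Spec2

section Spec3

variable {n : ℕ}

noncomputable def compNegHom : ℂ[X] →+* ℂ[X] := eval₂RingHom C (-X)

lemma compNegHom_apply (p : ℂ[X]) : compNegHom p = p.comp (-X) := rfl

lemma charpoly_neg_eq (M : Matrix (Fin n) (Fin n) ℂ) :
    (-M).charpoly = (-1 : ℂ[X]) ^ n * (M.charpoly.comp (-X)) := by
  have h1 : M.charpoly.comp (-X) = ((charmatrix M).map compNegHom).det := by
    rw [Matrix.charpoly, ← compNegHom_apply, RingHom.map_det]
    rfl
  have h2 : (charmatrix M).map compNegHom = -(charmatrix (-M)) := by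
    ext i j : 2
    by_cases h : i = j
    · subst h
      simp only [Matrix.map_apply, charmatrix_apply_eq, compNegHom_apply, sub_comp, X_comp,
        C_comp, Matrix.neg_apply, map_neg]
      ring
    · simp only [Matrix.map_apply, charmatrix_apply_ne _ _ _ h, compNegHom_apply, neg_comp,
        C_comp, Matrix.neg_apply, map_neg]
      ring
  rw [h1, h2, Matrix.det_neg, Fintype.card_fin, Matrix.charpoly, ← mul_assoc, ← mul_pow]
  simp

lemma multiset_prod_X_sub_C_comp_neg (s : Multiset ℂ) :
    ((s.map fun r => X - C r).prod).comp (-X)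
      = (-1 : ℂ[X]) ^ (Multiset.card s) * ((s.map fun r => X - C (-r)).prod) := by
  rw [← compNegHom_apply, map_multiset_prod, Multiset.map_map]
  have h : ∀ r : ℂ, (compNegHom ∘ fun r => X - C r) r = (-1 : ℂ[X]) * (X - C (-r)) := by
    intro r
    simp only [Function.comp_apply, compNegHom_apply, sub_comp, X_comp, C_comp, map_neg]
    ring
  rw [Multiset.map_congr rfl fun r _ => h r]
  have h2 : (s.map fun r => (-1 : ℂ[X]) * (X - C (-r))).prod
      = (s.map fun _ => (-1 : ℂ[X])).prod * (s.map fun r => X - C (-r)).prod := by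
    rw [← Multiset.prod_map_mul]
  rw [h2, Multiset.map_const', Multiset.prod_replicate]

lemma roots_neg_of_charpoly_eq {M : Matrix (Fin n) (Fin n) ℂ}
    (h : (-M).charpoly = M.charpoly) :
    M.charpoly.roots = M.charpoly.roots.map (fun r => -r) := by
  have hmon := Matrix.charpoly_monic M
  have hsp : M.charpoly.Splits := IsAlgClosed.splits _
  have hcard : Multiset.card M.charpoly.roots = n := by
    have h0 := hsp.natDegree_eq_card_roots
    rw [← h0, Matrix.charpoly_natDegree_eq_dim, Fintype.card_fin]
  have hprod : M.charpoly = (M.charpoly.roots.map fun r => X - C r).prod :=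
    hsp.eq_prod_roots_of_monic hmon
  have hneg : (-M).charpoly = ((M.charpoly.roots.map fun r => -r).map fun r => X - C r).prod := by
    rw [charpoly_neg_eq M]
    conv_lhs => rw [hprod]
    rw [multiset_prod_X_sub_C_comp_neg, hcard, ← mul_assoc, ← mul_pow]
    simp [Multiset.map_map]
  conv_lhs => rw [← roots_multiset_prod_X_sub_C M.charpoly.roots, ← hprod]
  rw [← roots_multiset_prod_X_sub_C (M.charpoly.roots.map fun r => -r), ← hneg, h]

end Spec3

section Spec4

variable {n : ℕ}

lemma symSpec_of_charpoly_neg_eq {M : Matrix (Fin n) (Fin n) ℂ}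
    (h : (-M).charpoly = M.charpoly) : SymSpec M := by
  intro μ
  have hr := roots_neg_of_charpoly_eq h
  rw [← Polynomial.count_roots, ← Polynomial.count_roots]
  conv_lhs => rw [hr]
  have hc := Multiset.count_map_eq_count' (fun r : ℂ => -r) M.charpoly.roots neg_injective (-μ)
  simpa using hc

lemma trace_pow_eq_zero_of_symSpec {M : Matrix (Fin n) (Fin n) ℂ} (hM : M.IsHermitian)
    (hs : SymSpec M) {k : ℕ} (hk : Odd k) : (M ^ k).trace = 0 := by
  set s : Multiset ℂ := Finset.univ.val.map (fun i => ((hM.eigenvalues i : ℝ) : ℂ)) with hsdef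
  have hcp : M.charpoly = (s.map fun r => X - C r).prod := by
    rw [herm_charpoly hM, hsdef, Multiset.map_map, Finset.prod_eq_multiset_prod]
    rfl
  have hroots : M.charpoly.roots = s := by rw [hcp, roots_multiset_prod_X_sub_C]
  have hneg : s = s.map (fun r => -r) := by
    apply Multiset.ext.mpr
    intro a
    have h1 : s.count a = s.count (-a) := by
      have := hs a
      rwa [← Polynomial.count_roots, ← Polynomial.count_roots, hroots] at this
    have h2 := Multiset.count_map_eq_count' (fun r : ℂ => -r) s neg_injective (-a)
    simp only [neg_neg] at h2
    rw [h1, ← h2]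
  have hT : (s.map fun r => r ^ k).sum = 0 := by
    have h1 : (s.map fun r => r ^ k).sum = -(s.map fun r => r ^ k).sum := by
      conv_lhs => rw [hneg, Multiset.map_map]
      have h2 : Multiset.map ((fun r : ℂ => r ^ k) ∘ fun r => -r) s
          = Multiset.map (fun r : ℂ => -(r ^ k)) s :=
        Multiset.map_congr rfl fun r _ => by simp [Function.comp, hk.neg_pow]
      rw [h2]
      simp [Multiset.sum_map_neg']
    have h4 : (s.map fun r : ℂ => r ^ k).sum + (s.map fun r : ℂ => r ^ k).sum = 0 :=
      add_eq_zero_iff_eq_neg.mpr h1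
    have h5 : (2 : ℂ) * (s.map fun r : ℂ => r ^ k).sum = 0 := by rw [two_mul]; exact h4
    exact (mul_eq_zero.mp h5).resolve_left two_ne_zero
  rw [herm_trace_pow hM k]
  have h6 := hT
  rw [hsdef, Multiset.map_map] at h6
  rw [Finset.sum_eq_multiset_sum]
  exact h6

end Spec4

section Herm

variable {n : ℕ}

lemma mgherm_isHermitian (A : Fin n → Fin n → Bool) (θ : ℝ) : (MGHerm A θ).IsHermitian := by
  have key : ∀ t : ℝ, star (Complex.exp (t * Complex.I)) = Complex.exp (-(t * Complex.I)) := by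
    intro t
    rw [Complex.star_def, ← Complex.exp_conj]
    congr 1
    rw [_root_.map_mul, Complex.conj_ofReal, Complex.conj_I]
    ring
  have key2 : ∀ t : ℝ, star (Complex.exp (-(t * Complex.I))) = Complex.exp (t * Complex.I) := by
    intro t
    rw [Complex.star_def, ← Complex.exp_conj]
    congr 1
    rw [map_neg, _root_.map_mul, Complex.conj_ofReal, Complex.conj_I]
    ring
  ext x y
  simp only [conjTranspose_apply, MGHerm]
  by_cases h1 : A y x <;> by_cases h2 : A x y
  · simp [h1, h2]
  · simp [h1, h2, neg_mul, key]
  · simp [h1, h2, neg_mul, key2]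
  · simp [h1, h2]

lemma trace_map_pow {S : Type*} [CommRing S] (f : ℂ[X] →+* S)
    (P : Matrix (Fin n) (Fin n) ℂ[X]) (k : ℕ) :
    ((P.map f) ^ k).trace = f ((P ^ k).trace) := by
  have h1 : P.map f = f.mapMatrix P := rfl
  rw [h1, ← map_pow]
  simp [Matrix.trace, Matrix.diag, RingHom.mapMatrix_apply, Matrix.map_apply]

lemma trace_map_pow' (f : ℝ →+* ℂ) (P : Matrix (Fin n) (Fin n) ℝ) (k : ℕ) :
    ((P.map f) ^ k).trace = f ((P ^ k).trace) := by
  have h1 : P.map f = f.mapMatrix P := rfl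
  rw [h1, ← map_pow]
  simp [Matrix.trace, Matrix.diag, RingHom.mapMatrix_apply, Matrix.map_apply]

end Herm

section Fwd

variable {n : ℕ}

lemma mgherm_eq_zero_of_not_adj {A : Fin n → Fin n → Bool} {x y : Fin n}
    (h : ¬ (A x y ∨ A y x)) (θ : ℝ) : MGHerm A θ x y = 0 := by
  push_neg at h
  simp [MGHerm, h.1, h.2]

lemma forward_symSpec {A : Fin n → Fin n → Bool} (hb : MGBipartite A) (θ : ℝ) :
    SymSpec (MGHerm A θ) := by
  classical
  obtain ⟨S, hS⟩ := hb
  set d : Fin n → ℂ := fun v => if v ∈ S then 1 else -1 with hd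
  have hdd : ∀ v, d v * d v = 1 := by
    intro v
    by_cases h : v ∈ S <;> simp [hd, h]
  set D : Matrix (Fin n) (Fin n) ℂ := Matrix.diagonal d with hD
  have hD1 : D * D = 1 := by
    rw [hD, Matrix.diagonal_mul_diagonal]
    ext i j
    by_cases h : i = j
    · subst h; simp [hdd i]
    · simp [Matrix.diagonal_apply_ne _ h, Matrix.one_apply_ne h]
  have hconj : D * (MGHerm A θ) * D = -(MGHerm A θ) := by
    ext x y
    rw [Matrix.neg_apply]
    rw [hD, Matrix.mul_diagonal, Matrix.diagonal_mul]
    by_cases hadj : A x y ∨ A y x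
    · have hxy := hS x y hadj
      by_cases hx : x ∈ S
      · have hy : y ∉ S := hxy.mp hx
        simp [hd, hx, hy]
      · have hy : y ∈ S := by
          by_contra hy
          exact hx (hxy.mpr hy)
        simp [hd, hx, hy]
    · rw [mgherm_eq_zero_of_not_adj hadj θ]
      ring
  apply symSpec_of_charpoly_neg_eq
  rw [← hconj, charpoly_conj_of_inv _ _ _ hD1]

end Fwd

section Bwd

variable {n : ℕ}

noncomputable def WP (A : Fin n → Fin n → Bool) : Matrix (Fin n) (Fin n) ℂ[X] :=
  fun x y => if A x y ∧ A y x then X else if A x y then X ^ 2 else if A y x then 1 else 0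

noncomputable def UB (A : Fin n → Fin n → Bool) : Matrix (Fin n) (Fin n) ℝ :=
  fun x y => if A x y ∨ A y x then 1 else 0

lemma WP_eval_exp (A : Fin n → Fin n → Bool) (θ : ℝ) :
    (WP A).map (eval (Complex.exp (θ * Complex.I)))
      = Complex.exp (θ * Complex.I) • MGHerm A θ := by
  ext x y
  simp only [Matrix.map_apply, WP, MGHerm, Matrix.smul_apply, smul_eq_mul]
  have hexp : Complex.exp (θ * Complex.I) * Complex.exp (-θ * Complex.I) = 1 := by
    rw [← Complex.exp_add]
    have h0 : (θ : ℂ) * Complex.I + -(θ : ℂ) * Complex.I = 0 := by ring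
    rw [h0, Complex.exp_zero]
  split_ifs with h1 h2 h3
  · simp
  · simp [sq]
  · simp [hexp.symm]
  · simp

lemma WP_eval_one (A : Fin n → Fin n → Bool) :
    (WP A).map (eval (1 : ℂ)) = (UB A).map (Complex.ofRealHom) := by
  ext x y
  simp only [Matrix.map_apply, WP, UB]
  by_cases h1 : A x y <;> by_cases h2 : A y x <;> simp [h1, h2]

lemma UB_trace_pow_pos {A : Fin n → Fin n → Bool} {v : Fin n} {k : ℕ}
    (hw : IsWalk (fun x y => A x y ∨ A y x) k v v) : (1 : ℝ) ≤ ((UB A) ^ k).trace := by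
  have hB : ∀ x y, 0 ≤ UB A x y := by
    intro x y
    by_cases h : A x y ∨ A y x <;> simp [UB, h]
  have hBR : ∀ x y : Fin n, (A x y ∨ A y x) → 1 ≤ UB A x y := by
    intro x y h
    simp [UB, h]
  have h1 : (1 : ℝ) ≤ ((UB A) ^ k) v v := one_le_pow_entry hB hBR k v v hw
  calc (1 : ℝ) ≤ ((UB A) ^ k) v v := h1
    _ ≤ ∑ i, ((UB A) ^ k) i i :=
      Finset.single_le_sum (fun i _ => pow_entry_nonneg hB k i i) (Finset.mem_univ v)

end Bwd

theorem bipartite_iff_persistent_symmetric_spectrum (θ₀ : ℝ)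
    (hθ₀ : θ₀ ∈ Set.Ioc (0 : ℝ) Real.pi) {n : ℕ} (A : Fin n → Fin n → Bool)
    (hA : ∀ v, A v v = false) :
    MGBipartite A ↔
      ∃ ε > (0 : ℝ), ∀ θ ∈ Set.Ioo (θ₀ - ε) (θ₀ + ε), SymSpec (MGHerm A θ) := by

  constructor
  · intro hb
    exact ⟨1, one_pos, fun θ _ => forward_symSpec hb θ⟩
  · rintro ⟨ε, hε, hsym⟩
    by_contra hnb
    obtain ⟨v, k, hk, hwalk⟩ := exists_odd_closed_walk
      (R := fun x y : Fin n => A x y ∨ A y x) (fun a b h => h.symm) hnb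
    set q : ℂ[X] := (((WP A) ^ k).trace) with hq
    have hq0 : q = 0 := by
      apply Polynomial.eq_zero_of_infinite_isRoot
      set δ : ℝ := min ε 1 with hδ
      have hδpos : 0 < δ := lt_min hε one_pos
      have hδ1 : δ ≤ 1 := min_le_right _ _
      have hδε : δ ≤ ε := min_le_left _ _
      have hroot : ∀ θ ∈ Set.Ioo θ₀ (θ₀ + δ), IsRoot q (Complex.exp (θ * Complex.I)) := by
        intro θ hθ
        have hθmem : θ ∈ Set.Ioo (θ₀ - ε) (θ₀ + ε) :=
          ⟨by have := hθ.1; linarith, by have := hθ.2; linarith⟩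
        have htr0 : ((MGHerm A θ) ^ k).trace = 0 :=
          trace_pow_eq_zero_of_symSpec (mgherm_isHermitian A θ) (hsym θ hθmem) hk
        have h2 := trace_map_pow (evalRingHom (Complex.exp (θ * Complex.I))) (WP A) k
        rw [show ((WP A).map (evalRingHom (Complex.exp (θ * Complex.I)))
            : Matrix (Fin n) (Fin n) ℂ) = (WP A).map (eval (Complex.exp (θ * Complex.I)))
            from rfl, WP_eval_exp, _root_.smul_pow, Matrix.trace_smul, htr0, smul_zero] at h2
        exact h2.symm
      have himg : ((fun θ : ℝ => Complex.exp (θ * Complex.I)) '' Set.Ioo θ₀ (θ₀ + δ)).Infinite := by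
        apply Set.Infinite.image ?_ (Set.Ioo_infinite (by linarith))
        intro a ha b hb hab
        obtain ⟨m, hm⟩ := Complex.exp_eq_exp_iff_exists_int.mp hab
        have h4 : ((a - b - m * (2 * π) : ℝ) : ℂ) * Complex.I = 0 := by
          push_cast
          linear_combination hm
        rcases mul_eq_zero.mp h4 with h5 | h5
        · have h6 : a - b - m * (2 * π) = 0 := by exact_mod_cast h5
          have hm0 : m = 0 := by
            by_contra hm0
            have h7 : (1 : ℝ) ≤ |(m : ℝ)| := by
              have := Int.one_le_abs (by omega : m ≠ 0)
              exact_mod_cast this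
            have h8 : |a - b| < 1 := by
              rw [abs_lt]
              constructor
              · have := ha.1; have := hb.2; linarith
              · have := ha.2; have := hb.1; linarith
            have h9 : a - b = m * (2 * π) := by linarith
            rw [h9, abs_mul] at h8
            have hππ : (3 : ℝ) < π := Real.pi_gt_three
            have habs2 : |(2 : ℝ) * π| = 2 * π := abs_of_pos (by linarith)
            rw [habs2] at h8
            nlinarith [abs_nonneg ((m : ℝ))]
          rw [hm0] at h6
          push_cast at h6
          linarith
        · exact absurd h5 Complex.I_ne_zero
      exact himg.mono (by rintro z ⟨θ, hθ, rfl⟩; exact hroot θ hθ)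
    have hone : eval 1 q = 0 := by rw [hq0]; simp
    have h2 := trace_map_pow (evalRingHom (1 : ℂ)) (WP A) k
    rw [show ((WP A).map (evalRingHom (1 : ℂ)) : Matrix (Fin n) (Fin n) ℂ)
        = (WP A).map (eval (1 : ℂ)) from rfl, WP_eval_one] at h2
    rw [trace_map_pow' Complex.ofRealHom (UB A) k] at h2
    have h3 : Complex.ofRealHom (((UB A) ^ k).trace) = 0 := by
      rw [h2]; exact hone
    have h4 : ((UB A) ^ k).trace = 0 := by
      have := h3
      simpa using this
    have h5 := UB_trace_pow_pos hwalk
    linarith
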